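/- Let V be a real vector space, A ⊆ V an affine subset (i.e. λ·x + (1-λ)·y ∈ A for all x, y ∈ A and λ ∈ ℝ), F ⊆ A a convex subset and N ⊆ A a convex subset. Then the robustness function R_{F,N} is convex on A: for all x₁, x₂ ∈ A and λ ∈ [0,1], R_{F,N}(λ·x₁ + (1-λ)·x₂) ≤ λ·R_{F,N}(x₁) + (1-λ)·R_{F,N}(x₂), the inequality being in [0,∞]. -/

import Mathlib

open scoped ENNReal NNReal

/-- The robustness `R_{F,N}(x)`: the infimum of those `r ≥ 0` such that
`(1/(1+r)) • (x + r • y) ∈ F` for some `y ∈ N`, with `inf ∅ = ∞`. -/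
noncomputable def Rob {V : Type*} [AddCommGroup V] [Module ℝ V]
    (F N : Set V) (x : V) : ℝ≥0∞ :=
  ⨅ r ∈ {r : ℝ≥0 | ∃ y ∈ N, (1 + (r : ℝ))⁻¹ • (x + (r : ℝ) • y) ∈ F}, (r : ℝ≥0∞)

/-- Convexity of the robustness function on an affine subset `A`. -/
theorem rob_convex {V : Type*} [AddCommGroup V] [Module ℝ V] (A F N : Set V)
    (hA : ∀ x ∈ A, ∀ y ∈ A, ∀ l : ℝ, l • x + (1 - l) • y ∈ A)
    (hFA : F ⊆ A) (hF : Convex ℝ F) (hNA : N ⊆ A) (hN : Convex ℝ N)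
    (x₁ x₂ : V) (hx₁ : x₁ ∈ A) (hx₂ : x₂ ∈ A)
    (l : ℝ) (hl0 : 0 ≤ l) (hl1 : l ≤ 1) :
    Rob F N (l • x₁ + (1 - l) • x₂) ≤
      ENNReal.ofReal l * Rob F N x₁ + ENNReal.ofReal (1 - l) * Rob F N x₂ := by
  rcases eq_or_lt_of_le hl0 with rfl | hl0'
  · simp
  rcases eq_or_lt_of_le hl1 with rfl | hl1'
  · simp
  have h1l : 0 < 1 - l := by linarith
  have key : ∀ r₁ r₂ : ℝ≥0,
      r₁ ∈ {r : ℝ≥0 | ∃ y ∈ N, (1 + (r : ℝ))⁻¹ • (x₁ + (r : ℝ) • y) ∈ F} →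
      r₂ ∈ {r : ℝ≥0 | ∃ y ∈ N, (1 + (r : ℝ))⁻¹ • (x₂ + (r : ℝ) • y) ∈ F} →
      (⟨l * (r₁ : ℝ) + (1 - l) * (r₂ : ℝ), by positivity⟩ : ℝ≥0) ∈
        {r : ℝ≥0 | ∃ y ∈ N,
          (1 + (r : ℝ))⁻¹ • ((l • x₁ + (1 - l) • x₂) + (r : ℝ) • y) ∈ F} := by
    intro r₁ r₂ h₁ h₂
    obtain ⟨y₁, hy₁, hz₁⟩ := h₁
    obtain ⟨y₂, hy₂, hz₂⟩ := h₂
    have ha : (0:ℝ) ≤ (r₁ : ℝ) := r₁.2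
    have hb : (0:ℝ) ≤ (r₂ : ℝ) := r₂.2
    have hr : (0:ℝ) ≤ l * (r₁ : ℝ) + (1 - l) * (r₂ : ℝ) := by positivity
    rcases eq_or_lt_of_le hr with hr0 | hrpos
    · -- combination is 0, so r₁ = r₂ = 0 and x₁, x₂ ∈ F
      have ha0 : (r₁ : ℝ) = 0 := by nlinarith
      have hb0 : (r₂ : ℝ) = 0 := by nlinarith
      rw [ha0] at hz₁
      rw [hb0] at hz₂
      have hx₁F : x₁ ∈ F := by simpa using hz₁
      have hx₂F : x₂ ∈ F := by simpa using hz₂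
      refine ⟨y₁, hy₁, ?_⟩
      show (1 + (l * (r₁:ℝ) + (1 - l) * (r₂:ℝ)))⁻¹ • ((l • x₁ + (1 - l) • x₂) + (l * (r₁:ℝ) + (1 - l) * (r₂:ℝ)) • y₁) ∈ F
      rw [← hr0]
      simpa using hF hx₁F hx₂F hl0 h1l.le (by ring)
    · -- positive combination
      have hrne : l * (r₁ : ℝ) + (1 - l) * (r₂ : ℝ) ≠ 0 := ne_of_gt hrpos
      have h1a : (0:ℝ) < 1 + (r₁ : ℝ) := by linarith
      have h1b : (0:ℝ) < 1 + (r₂ : ℝ) := by linarith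
      have h1r : (0:ℝ) < 1 + (l * (r₁ : ℝ) + (1 - l) * (r₂ : ℝ)) := by linarith
      have hμ₁0 : 0 ≤ l * (r₁ : ℝ) / (l * (r₁ : ℝ) + (1 - l) * (r₂ : ℝ)) := by positivity
      have hμ₂0 : 0 ≤ (1 - l) * (r₂ : ℝ) / (l * (r₁ : ℝ) + (1 - l) * (r₂ : ℝ)) := by positivity
      have hμsum : l * (r₁ : ℝ) / (l * (r₁ : ℝ) + (1 - l) * (r₂ : ℝ)) +
          (1 - l) * (r₂ : ℝ) / (l * (r₁ : ℝ) + (1 - l) * (r₂ : ℝ)) = 1 := by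
        field_simp
      have hyN : (l * (r₁ : ℝ) / (l * (r₁ : ℝ) + (1 - l) * (r₂ : ℝ))) • y₁ +
          ((1 - l) * (r₂ : ℝ) / (l * (r₁ : ℝ) + (1 - l) * (r₂ : ℝ))) • y₂ ∈ N :=
        hN hy₁ hy₂ hμ₁0 hμ₂0 hμsum
      have hν₁0 : 0 ≤ l * (1 + (r₁ : ℝ)) / (1 + (l * (r₁ : ℝ) + (1 - l) * (r₂ : ℝ))) := by
        positivity
      have hν₂0 : 0 ≤ (1 - l) * (1 + (r₂ : ℝ)) / (1 + (l * (r₁ : ℝ) + (1 - l) * (r₂ : ℝ))) := by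
        positivity
      have hνsum : l * (1 + (r₁ : ℝ)) / (1 + (l * (r₁ : ℝ) + (1 - l) * (r₂ : ℝ))) +
          (1 - l) * (1 + (r₂ : ℝ)) / (1 + (l * (r₁ : ℝ) + (1 - l) * (r₂ : ℝ))) = 1 := by
        rw [← add_div, div_eq_one_iff_eq (ne_of_gt h1r)]
        ring
      have hwF := hF hz₁ hz₂ hν₁0 hν₂0 hνsum
      refine ⟨_, hyN, ?_⟩
      show (1 + (l * (r₁:ℝ) + (1 - l) * (r₂:ℝ)))⁻¹ • ((l • x₁ + (1 - l) • x₂) + (l * (r₁:ℝ) + (1 - l) * (r₂:ℝ)) • _) ∈ F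
      convert hwF using 1
      match_scalars
      all_goals (field_simp [ne_of_gt h1r, ne_of_gt h1a, ne_of_gt h1b, hrne]; try ring)
  have hc₁0 : ENNReal.ofReal l ≠ 0 := by
    simp only [ne_eq, ENNReal.ofReal_eq_zero, not_le]; exact hl0'
  have hc₂0 : ENNReal.ofReal (1 - l) ≠ 0 := by
    simp only [ne_eq, ENNReal.ofReal_eq_zero, not_le]; exact h1l
  have hRob : ∀ z : V, Rob F N z =
      ⨅ r : {r : ℝ≥0 | ∃ y ∈ N, (1 + (r : ℝ))⁻¹ • (z + (r : ℝ) • y) ∈ F},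
        ((r : ℝ≥0) : ℝ≥0∞) := by
    intro z
    rw [Rob, iInf_subtype']
  rw [hRob x₁, hRob x₂, ENNReal.mul_iInf_of_ne hc₁0 ENNReal.ofReal_ne_top,
    ENNReal.mul_iInf_of_ne hc₂0 ENNReal.ofReal_ne_top, ENNReal.iInf_add]
  refine le_iInf fun r₁ => ?_
  rw [ENNReal.add_iInf]
  refine le_iInf fun r₂ => ?_
  have hmem := key r₁.1 r₂.1 r₁.2 r₂.2
  refine le_trans (iInf₂_le _ hmem) (le_of_eq ?_)
  rw [← ENNReal.ofReal_coe_nnreal (p := ⟨l * ((r₁ : ℝ≥0) : ℝ) + (1 - l) * ((r₂ : ℝ≥0) : ℝ), by positivity⟩)]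
  show ENNReal.ofReal (l * ((r₁ : ℝ≥0) : ℝ) + (1 - l) * ((r₂ : ℝ≥0) : ℝ)) = _
  rw [ENNReal.ofReal_add (by positivity) (by positivity), ENNReal.ofReal_mul hl0,
    ENNReal.ofReal_mul h1l.le, ENNReal.ofReal_coe_nnreal, ENNReal.ofReal_coe_nnreal]
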